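/- Let n ≥ 1, a > 0, and let φ₀ : ℝⁿ → ℝ be a bounded continuous integrable function. Define, for t < 0 and x ∈ ℝⁿ, f(x, t) = (−4πa²t)^{−n/2} ∫_{ℝⁿ} φ₀(η) · exp(−‖η − x‖² / (−4a²t)) dη, where ‖η − x‖² = Σ_{i=1}^n (η_i − x_i)². Then for every x ∈ ℝⁿ and every t < 0, f satisfies the n-dimensional anti-diffusion equation ∂f/∂t (x, t) + a² Δf(x, t) = 0, where Δf = Σ_{i=1}^n ∂²f/∂x_i² is the Laplacian of f in the spatial variable. -/

import Mathlib

open MeasureTheory Real Filter Topology Metric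


lemma aux_mul_exp_le {u : ℝ} (hu : 0 ≤ u) : u * Real.exp (-u) ≤ 1 := by
  have h := Real.add_one_le_exp u
  have hp := Real.exp_pos u
  have hne : Real.exp (-u) * Real.exp u = 1 := by
    rw [← Real.exp_add]; simp
  nlinarith [Real.exp_pos (-u)]

lemma key1 {s b : ℝ} (hb : 0 < b) (hs : 0 ≤ s) :
    Real.exp (-s / b) * (s / b ^ 2) ≤ 1 / b := by
  have h := aux_mul_exp_le (u := s / b) (by positivity)
  have hgoal : Real.exp (-s / b) * (s / b ^ 2) = (s / b * Real.exp (-(s / b))) / b := by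
    rw [neg_div]; field_simp
  rw [hgoal]
  rw [div_le_div_iff₀ hb hb]; nlinarith

lemma key2 {u b : ℝ} (hb : 0 < b) : |2 * (u / b)| * Real.exp (-(u ^ 2) / b) ≤ 1 / b + 1 := by
  have h := aux_mul_exp_le (u := u ^ 2 / b) (by positivity)
  have he : -(u ^ 2) / b = -(u ^ 2 / b) := by ring
  rw [he]
  set E := Real.exp (-(u ^ 2 / b)) with hE
  have hE0 : 0 < E := Real.exp_pos _
  have hE1 : E ≤ 1 := Real.exp_le_one_iff.2 (neg_nonpos.2 (by positivity))
  have habs : |2 * (u / b)| = 2 * |u| / b := by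
    rw [abs_mul, abs_div, abs_of_pos hb]; simp [abs_of_nonneg, mul_div_assoc]
  rw [habs]
  have h2 : |u| ^ 2 = u ^ 2 := sq_abs u
  have hau : 0 ≤ |u| := abs_nonneg u
  have key : u ^ 2 * E ≤ b := by
    have h' : u ^ 2 / b * E ≤ 1 := h
    rw [div_mul_eq_mul_div, div_le_one hb] at h'
    linarith
  rw [div_mul_eq_mul_div, div_le_iff₀ hb]
  have hb' : (1 / b + 1) * b = 1 + b := by field_simp
  rw [hb']
  nlinarith [sq_nonneg (|u| - 1), mul_le_mul_of_nonneg_right hE1 hau]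

lemma key3 {u b : ℝ} (hb : 0 < b) :
    |(2 * (u / b)) ^ 2 - 2 / b| * Real.exp (-(u ^ 2) / b) ≤ 6 / b := by
  have h := aux_mul_exp_le (u := u ^ 2 / b) (by positivity)
  have he : -(u ^ 2) / b = -(u ^ 2 / b) := by ring
  rw [he]
  set E := Real.exp (-(u ^ 2 / b)) with hE
  have hE0 : 0 < E := Real.exp_pos _
  have hE1 : E ≤ 1 := Real.exp_le_one_iff.2 (neg_nonpos.2 (by positivity))
  have key : u ^ 2 * E ≤ b := by
    have h' : u ^ 2 / b * E ≤ 1 := h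
    rw [div_mul_eq_mul_div, div_le_one hb] at h'
    linarith
  have habs : |(2 * (u / b)) ^ 2 - 2 / b| ≤ 4 * u ^ 2 / b ^ 2 + 2 / b := by
    refine (abs_sub _ _).trans ?_
    have h1 : |(2 * (u / b)) ^ 2| = 4 * u ^ 2 / b ^ 2 := by
      rw [abs_of_nonneg (sq_nonneg _)]; field_simp; ring
    rw [h1, abs_of_nonneg (by positivity : (0:ℝ) ≤ 2 / b)]
  have h4 : (4 * u ^ 2 / b ^ 2 + 2 / b) * E ≤ 6 / b := by
    rw [div_add_div _ _ (by positivity : (b:ℝ)^2 ≠ 0) hb.ne', div_mul_eq_mul_div,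
      div_le_div_iff₀ (by positivity) hb]
    have k1 : 4 * (u ^ 2 * E) * b ^ 2 ≤ 4 * b * b ^ 2 :=
      mul_le_mul_of_nonneg_right (by linarith) (by positivity)
    have k2 : b ^ 2 * 2 * E * b ≤ b ^ 2 * 2 * b := by nlinarith [mul_pos (mul_pos hb hb) hb]
    nlinarith
  calc |(2 * (u / b)) ^ 2 - 2 / b| * E ≤ (4 * u ^ 2 / b ^ 2 + 2 / b) * E :=
        mul_le_mul_of_nonneg_right habs hE0.le
    _ ≤ 6 / b := h4
section
variable {n : ℕ} {φ₀ : (Fin n → ℝ) → ℝ}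

lemma integrable_aux (hint : Integrable φ₀) {g : (Fin n → ℝ) → ℝ} (hg : Continuous g)
    {C : ℝ} (hC : ∀ η, |g η| ≤ C) : Integrable (fun η => φ₀ η * g η) := by
  have h := hint.bdd_mul hg.aestronglyMeasurable (Eventually.of_forall fun x => by rw [Real.norm_eq_abs]; exact hC x)
  simpa [mul_comm] using h

lemma contS (x : Fin n → ℝ) : Continuous (fun η : Fin n → ℝ => ∑ i, (η i - x i) ^ 2) := by
  fun_prop

lemma Snonneg (x η : Fin n → ℝ) : (0:ℝ) ≤ ∑ i, (η i - x i) ^ 2 :=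
  Finset.sum_nonneg fun i _ => sq_nonneg _

lemma hasDerivAt_K (hint : Integrable φ₀) (hcont : Continuous φ₀)
    (x : Fin n → ℝ) {b : ℝ} (hb : 0 < b) :
    Integrable (fun η : Fin n → ℝ =>
        φ₀ η * (Real.exp (-(∑ i, (η i - x i) ^ 2) / b) * ((∑ i, (η i - x i) ^ 2) / b ^ 2))) ∧
    HasDerivAt (fun b : ℝ => ∫ η : Fin n → ℝ, φ₀ η * Real.exp (-(∑ i, (η i - x i) ^ 2) / b))
      (∫ η : Fin n → ℝ,
        φ₀ η * (Real.exp (-(∑ i, (η i - x i) ^ 2) / b) * ((∑ i, (η i - x i) ^ 2) / b ^ 2))) b := by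
  have hcS := contS x
  have hball : ∀ b' ∈ ball b (b / 2), 0 < b' ∧ b / 2 < b' := by
    intro b' hb'
    have := abs_lt.1 (mem_ball_iff_norm.1 hb')
    constructor <;> linarith [this.1]
  have hmeas : ∀ b' : ℝ, AEStronglyMeasurable
      (fun η : Fin n → ℝ => φ₀ η * Real.exp (-(∑ i, (η i - x i) ^ 2) / b')) volume :=
    fun b' => (hcont.mul ((hcS.neg.div_const b').rexp)).aestronglyMeasurable
  have hF_int : Integrable
      (fun η : Fin n → ℝ => φ₀ η * Real.exp (-(∑ i, (η i - x i) ^ 2) / b)) :=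
    integrable_aux hint ((hcS.neg.div_const b).rexp) (C := 1) (fun η => by
      rw [abs_of_nonneg (Real.exp_pos _).le]
      exact Real.exp_le_one_iff.2 (div_nonpos_iff.2 (Or.inr ⟨neg_nonpos.2 (Snonneg x η), hb.le⟩)))
  have hF'_meas : AEStronglyMeasurable (fun η : Fin n → ℝ =>
      φ₀ η * (Real.exp (-(∑ i, (η i - x i) ^ 2) / b) * ((∑ i, (η i - x i) ^ 2) / b ^ 2)))
      volume :=
    (hcont.mul (((hcS.neg.div_const b).rexp).mul (hcS.div_const _))).aestronglyMeasurable
  have h_bound : ∀ᵐ η : Fin n → ℝ, ∀ b' ∈ ball b (b / 2),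
      ‖φ₀ η * (Real.exp (-(∑ i, (η i - x i) ^ 2) / b') * ((∑ i, (η i - x i) ^ 2) / b' ^ 2))‖
        ≤ |φ₀ η| * (2 / b) := by
    filter_upwards with η b' hb'
    obtain ⟨hb'0, hbb⟩ := hball b' hb'
    rw [norm_mul]
    refine mul_le_mul_of_nonneg_left ?_ (norm_nonneg _) |>.trans_eq
      (by rw [Real.norm_eq_abs])
    rw [Real.norm_eq_abs, abs_of_nonneg (by positivity)]
    calc Real.exp (-(∑ i, (η i - x i) ^ 2) / b') * ((∑ i, (η i - x i) ^ 2) / b' ^ 2)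
        ≤ 1 / b' := key1 hb'0 (Snonneg x η)
      _ ≤ 2 / b := by rw [div_le_div_iff₀ hb'0 hb]; linarith
  have h_diff : ∀ᵐ η : Fin n → ℝ, ∀ b' ∈ ball b (b / 2),
      HasDerivAt (fun c : ℝ => φ₀ η * Real.exp (-(∑ i, (η i - x i) ^ 2) / c))
        (φ₀ η * (Real.exp (-(∑ i, (η i - x i) ^ 2) / b') *
          ((∑ i, (η i - x i) ^ 2) / b' ^ 2))) b' := by
    filter_upwards with η b' hb'
    obtain ⟨hb'0, _⟩ := hball b' hb'
    set s := ∑ i, (η i - x i) ^ 2 with hs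
    have hd : HasDerivAt (fun c : ℝ => -s / c) (s / b' ^ 2) b' := by
      have h := (hasDerivAt_inv hb'0.ne').const_mul (-s)
      simp only [div_eq_mul_inv]
      exact h.congr_deriv (by ring)
    exact (hd.exp).const_mul (φ₀ η)
  exact hasDerivAt_integral_of_dominated_loc_of_deriv_le (ball_mem_nhds b (by positivity))
    (Eventually.of_forall hmeas) hF_int hF'_meas h_bound (hint.abs.mul_const _) h_diff

end
section
variable {n : ℕ} {φ₀ : (Fin n → ℝ) → ℝ}
lemma integrable_phiE (hint : Integrable φ₀) (hcont : Continuous φ₀)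
    (x : Fin n → ℝ) {b : ℝ} (hb : 0 < b) :
    Integrable (fun η : Fin n → ℝ => φ₀ η * Real.exp (-(∑ i, (η i - x i) ^ 2) / b)) :=
  integrable_aux hint (((contS x).neg.div_const b).rexp) (C := 1) (fun η => by
    rw [abs_of_nonneg (Real.exp_pos _).le]
    exact Real.exp_le_one_iff.2 (div_nonpos_iff.2 (Or.inr ⟨neg_nonpos.2 (Snonneg x η), hb.le⟩)))
end
section
variable {n : ℕ} {φ₀ : (Fin n → ℝ) → ℝ}

lemma sum_update_eq (η x : Fin n → ℝ) (i : Fin n) (y : ℝ) :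
    ∑ i', (η i' - Function.update x i y i') ^ 2
      = (η i - y) ^ 2 + ∑ i' ∈ Finset.univ.erase i, (η i' - x i') ^ 2 := by
  rw [← Finset.add_sum_erase _ _ (Finset.mem_univ i), Function.update_self]
  congr 1
  exact Finset.sum_congr rfl fun j hj => by
    rw [Function.update_of_ne (Finset.ne_of_mem_erase hj)]

lemma Rnonneg (x η : Fin n → ℝ) (i : Fin n) :
    (0:ℝ) ≤ ∑ i' ∈ Finset.univ.erase i, (η i' - x i') ^ 2 :=
  Finset.sum_nonneg fun j _ => sq_nonneg _

lemma contR (x : Fin n → ℝ) (i : Fin n) :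
    Continuous (fun η : Fin n → ℝ => ∑ i' ∈ Finset.univ.erase i, (η i' - x i') ^ 2) := by
  fun_prop

-- pointwise exponent derivative
lemma hasDerivAt_exponent (c R b : ℝ) (y : ℝ) :
    HasDerivAt (fun y : ℝ => -((c - y) ^ 2 + R) / b) (2 * ((c - y) / b)) y := by
  have h0 : HasDerivAt (fun y : ℝ => c - y) (-1) y := (hasDerivAt_id y).const_sub c
  have h1 := ((h0.pow 2).add_const R).div_const b
  have h2 := h1.neg
  refine (h2.congr_of_eventuallyEq (Eventually.of_forall fun z => ?_)).congr_deriv ?_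
  · simp only [Pi.neg_apply, Pi.pow_apply]; ring
  · push_cast; ring

lemma hasDerivAt_D1 (hint : Integrable φ₀) (hcont : Continuous φ₀)
    (x : Fin n → ℝ) (i : Fin n) {b : ℝ} (hb : 0 < b) (y : ℝ) :
    Integrable (fun η : Fin n → ℝ =>
        φ₀ η * (Real.exp (-(∑ i', (η i' - Function.update x i y i') ^ 2) / b) *
          (2 * ((η i - y) / b)))) ∧
    HasDerivAt (fun y : ℝ => ∫ η : Fin n → ℝ,
        φ₀ η * Real.exp (-(∑ i', (η i' - Function.update x i y i') ^ 2) / b))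
      (∫ η : Fin n → ℝ,
        φ₀ η * (Real.exp (-(∑ i', (η i' - Function.update x i y i') ^ 2) / b) *
          (2 * ((η i - y) / b)))) y := by
  have hcR := contR x i
  -- rewrite everything to split form
  have hsplit : ∀ (y : ℝ) (η : Fin n → ℝ),
      (∑ i', (η i' - Function.update x i y i') ^ 2)
        = (η i - y) ^ 2 + ∑ i' ∈ Finset.univ.erase i, (η i' - x i') ^ 2 :=
    fun y η => sum_update_eq η x i y
  simp only [hsplit]
  set R : (Fin n → ℝ) → ℝ := fun η => ∑ i' ∈ Finset.univ.erase i, (η i' - x i') ^ 2 with hR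
  have hexp_cont : ∀ y' : ℝ, Continuous
      (fun η : Fin n → ℝ => Real.exp (-((η i - y') ^ 2 + R η) / b)) := by
    intro y'; apply Continuous.rexp; apply Continuous.div_const; apply Continuous.neg
    exact ((continuous_apply i).sub continuous_const).pow 2 |>.add hcR
  have hmeas : ∀ y' : ℝ, AEStronglyMeasurable
      (fun η : Fin n → ℝ => φ₀ η * Real.exp (-((η i - y') ^ 2 + R η) / b)) volume :=
    fun y' => (hcont.mul (hexp_cont y')).aestronglyMeasurable
  have hexp_le1 : ∀ (y' : ℝ) (η : Fin n → ℝ),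
      Real.exp (-((η i - y') ^ 2 + R η) / b) ≤ 1 := fun y' η =>
    Real.exp_le_one_iff.2 (div_nonpos_iff.2 (Or.inr
      ⟨neg_nonpos.2 (by positivity), hb.le⟩))
  have hF_int : Integrable
      (fun η : Fin n → ℝ => φ₀ η * Real.exp (-((η i - y) ^ 2 + R η) / b)) :=
    integrable_aux hint (hexp_cont y) (C := 1) (fun η => by
      rw [abs_of_nonneg (Real.exp_pos _).le]; exact hexp_le1 y η)
  have hF'_meas : AEStronglyMeasurable (fun η : Fin n → ℝ =>
      φ₀ η * (Real.exp (-((η i - y) ^ 2 + R η) / b) * (2 * ((η i - y) / b)))) volume := by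
    refine (hcont.mul ((hexp_cont y).mul ?_)).aestronglyMeasurable
    fun_prop
  have hbound_ptwise : ∀ (y' : ℝ) (η : Fin n → ℝ),
      ‖φ₀ η * (Real.exp (-((η i - y') ^ 2 + R η) / b) * (2 * ((η i - y') / b)))‖
        ≤ |φ₀ η| * (1 / b + 1) := by
    intro y' η
    rw [norm_mul]
    refine mul_le_mul_of_nonneg_left ?_ (norm_nonneg _) |>.trans_eq
      (by rw [Real.norm_eq_abs])
    rw [Real.norm_eq_abs, abs_mul, abs_of_nonneg (Real.exp_pos _).le]
    have hmono : Real.exp (-((η i - y') ^ 2 + R η) / b)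
        ≤ Real.exp (-((η i - y') ^ 2) / b) := by
      apply Real.exp_le_exp.2
      rw [div_le_div_iff₀ hb hb]
      have := Rnonneg x η i
      nlinarith
    calc Real.exp (-((η i - y') ^ 2 + R η) / b) * |2 * ((η i - y') / b)|
        ≤ Real.exp (-((η i - y') ^ 2) / b) * |2 * ((η i - y') / b)| :=
          mul_le_mul_of_nonneg_right hmono (abs_nonneg _)
      _ ≤ 1 / b + 1 := by rw [mul_comm]; exact key2 hb
  have h_bound : ∀ᵐ η : Fin n → ℝ, ∀ y' ∈ ball y 1,
      ‖φ₀ η * (Real.exp (-((η i - y') ^ 2 + R η) / b) * (2 * ((η i - y') / b)))‖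
        ≤ |φ₀ η| * (1 / b + 1) :=
    Eventually.of_forall fun η y' _ => hbound_ptwise y' η
  have h_diff : ∀ᵐ η : Fin n → ℝ, ∀ y' ∈ ball y 1,
      HasDerivAt (fun y : ℝ => φ₀ η * Real.exp (-((η i - y) ^ 2 + R η) / b))
        (φ₀ η * (Real.exp (-((η i - y') ^ 2 + R η) / b) * (2 * ((η i - y') / b)))) y' := by
    filter_upwards with η y' _
    exact ((hasDerivAt_exponent (η i) (R η) b y').exp).const_mul (φ₀ η)
  exact hasDerivAt_integral_of_dominated_loc_of_deriv_le (ball_mem_nhds y one_pos)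
    (Eventually.of_forall hmeas) hF_int hF'_meas h_bound (hint.abs.mul_const _) h_diff

lemma hasDerivAt_D2 (hint : Integrable φ₀) (hcont : Continuous φ₀)
    (x : Fin n → ℝ) (i : Fin n) {b : ℝ} (hb : 0 < b) (y : ℝ) :
    Integrable (fun η : Fin n → ℝ =>
        φ₀ η * (Real.exp (-(∑ i', (η i' - Function.update x i y i') ^ 2) / b) *
          ((2 * ((η i - y) / b)) ^ 2 - 2 / b))) ∧
    HasDerivAt (fun y : ℝ => ∫ η : Fin n → ℝ,
        φ₀ η * (Real.exp (-(∑ i', (η i' - Function.update x i y i') ^ 2) / b) *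
          (2 * ((η i - y) / b))))
      (∫ η : Fin n → ℝ,
        φ₀ η * (Real.exp (-(∑ i', (η i' - Function.update x i y i') ^ 2) / b) *
          ((2 * ((η i - y) / b)) ^ 2 - 2 / b))) y := by
  have hcR := contR x i
  have hsplit : ∀ (y : ℝ) (η : Fin n → ℝ),
      (∑ i', (η i' - Function.update x i y i') ^ 2)
        = (η i - y) ^ 2 + ∑ i' ∈ Finset.univ.erase i, (η i' - x i') ^ 2 :=
    fun y η => sum_update_eq η x i y
  simp only [hsplit]
  set R : (Fin n → ℝ) → ℝ := fun η => ∑ i' ∈ Finset.univ.erase i, (η i' - x i') ^ 2 with hR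
  have hexp_cont : ∀ y' : ℝ, Continuous
      (fun η : Fin n → ℝ => Real.exp (-((η i - y') ^ 2 + R η) / b)) := by
    intro y'; apply Continuous.rexp; apply Continuous.div_const; apply Continuous.neg
    exact ((continuous_apply i).sub continuous_const).pow 2 |>.add hcR
  have hexp_le1 : ∀ (y' : ℝ) (η : Fin n → ℝ),
      Real.exp (-((η i - y') ^ 2 + R η) / b) ≤ 1 := fun y' η =>
    Real.exp_le_one_iff.2 (div_nonpos_iff.2 (Or.inr
      ⟨neg_nonpos.2 (by positivity), hb.le⟩))
  have hmeas : ∀ y' : ℝ, AEStronglyMeasurable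
      (fun η : Fin n → ℝ =>
        φ₀ η * (Real.exp (-((η i - y') ^ 2 + R η) / b) * (2 * ((η i - y') / b)))) volume := by
    intro y'
    refine (hcont.mul ((hexp_cont y').mul ?_)).aestronglyMeasurable
    fun_prop
  have hF_int : Integrable (fun η : Fin n → ℝ =>
      φ₀ η * (Real.exp (-((η i - y) ^ 2 + R η) / b) * (2 * ((η i - y) / b)))) :=
    (hasDerivAt_D1 hint hcont x i hb y).1.congr (by
      filter_upwards with η
      simp only [hsplit]
      rfl)
  have hF'_meas : AEStronglyMeasurable (fun η : Fin n → ℝ =>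
      φ₀ η * (Real.exp (-((η i - y) ^ 2 + R η) / b) *
        ((2 * ((η i - y) / b)) ^ 2 - 2 / b))) volume := by
    refine (hcont.mul ((hexp_cont y).mul ?_)).aestronglyMeasurable
    fun_prop
  have hbound_ptwise : ∀ (y' : ℝ) (η : Fin n → ℝ),
      ‖φ₀ η * (Real.exp (-((η i - y') ^ 2 + R η) / b) *
          ((2 * ((η i - y') / b)) ^ 2 - 2 / b))‖ ≤ |φ₀ η| * (6 / b) := by
    intro y' η
    rw [norm_mul]
    refine mul_le_mul_of_nonneg_left ?_ (norm_nonneg _) |>.trans_eq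
      (by rw [Real.norm_eq_abs])
    rw [Real.norm_eq_abs, abs_mul, abs_of_nonneg (Real.exp_pos _).le]
    have hmono : Real.exp (-((η i - y') ^ 2 + R η) / b)
        ≤ Real.exp (-((η i - y') ^ 2) / b) := by
      apply Real.exp_le_exp.2
      rw [div_le_div_iff₀ hb hb]
      have := Rnonneg x η i
      nlinarith
    calc Real.exp (-((η i - y') ^ 2 + R η) / b) * |(2 * ((η i - y') / b)) ^ 2 - 2 / b|
        ≤ Real.exp (-((η i - y') ^ 2) / b) * |(2 * ((η i - y') / b)) ^ 2 - 2 / b| :=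
          mul_le_mul_of_nonneg_right hmono (abs_nonneg _)
      _ ≤ 6 / b := by rw [mul_comm]; exact key3 hb
  have h_bound : ∀ᵐ η : Fin n → ℝ, ∀ y' ∈ ball y 1,
      ‖φ₀ η * (Real.exp (-((η i - y') ^ 2 + R η) / b) *
          ((2 * ((η i - y') / b)) ^ 2 - 2 / b))‖ ≤ |φ₀ η| * (6 / b) :=
    Eventually.of_forall fun η y' _ => hbound_ptwise y' η
  have h_diff : ∀ᵐ η : Fin n → ℝ, ∀ y' ∈ ball y 1,
      HasDerivAt (fun y : ℝ =>
          φ₀ η * (Real.exp (-((η i - y) ^ 2 + R η) / b) * (2 * ((η i - y) / b))))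
        (φ₀ η * (Real.exp (-((η i - y') ^ 2 + R η) / b) *
          ((2 * ((η i - y') / b)) ^ 2 - 2 / b))) y' := by
    filter_upwards with η y' _
    have h1 := (hasDerivAt_exponent (η i) (R η) b y').exp
    have h2 : HasDerivAt (fun y : ℝ => 2 * ((η i - y) / b)) (-2 / b) y' := by
      have h0 : HasDerivAt (fun y : ℝ => η i - y) (-1) y' := (hasDerivAt_id y').const_sub (η i)
      have := (h0.div_const b).const_mul 2
      exact this.congr_deriv (by ring)
    have h3 := (h1.mul h2).const_mul (φ₀ η)
    exact h3.congr_deriv (by ring)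
  exact hasDerivAt_integral_of_dominated_loc_of_deriv_le (ball_mem_nhds y one_pos)
    (Eventually.of_forall hmeas) hF_int hF'_meas h_bound (hint.abs.mul_const _) h_diff

end

/-- For `n ≥ 1`, `a > 0`, and bounded continuous integrable `φ₀ : ℝⁿ → ℝ`,
the function `f(x,t) = (−4πa²t)^{−n/2} ∫ φ₀(η) exp(−‖η−x‖²/(−4a²t)) dη`, where
`‖η−x‖² = Σᵢ (ηᵢ−xᵢ)²`, satisfies the n-dimensional anti-diffusion equation
`∂f/∂t + a² Δf = 0` at every `x ∈ ℝⁿ` and `t < 0`, where `Δf = Σᵢ ∂²f/∂xᵢ²`. -/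
theorem antidiffusion_n_dim (n : ℕ) (hn : 1 ≤ n) (a : ℝ) (ha : 0 < a)
    (φ₀ : (Fin n → ℝ) → ℝ)
    (hbdd : ∃ C, ∀ x, |φ₀ x| ≤ C) (hcont : Continuous φ₀) (hint : Integrable φ₀)
    (f : (Fin n → ℝ) → ℝ → ℝ)
    (hf : ∀ x t, t < 0 → f x t =
      (-4 * π * a ^ 2 * t) ^ (-(n : ℝ) / 2) *
        ∫ η : Fin n → ℝ,
          φ₀ η * Real.exp (-(∑ i, (η i - x i) ^ 2) / (-4 * a ^ 2 * t))) :
    ∀ (x : Fin n → ℝ) (t : ℝ), t < 0 →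
      deriv (fun s => f x s) t +
        a ^ 2 * ∑ i, iteratedDeriv 2 (fun y => f (Function.update x i y) t) (x i)
      = 0 := by
  intro x t ht
  have ha2 : (0:ℝ) < a ^ 2 := by positivity
  have hb : (0:ℝ) < -4 * a ^ 2 * t := by nlinarith
  have hD : (0:ℝ) < -4 * π * a ^ 2 * t := by nlinarith [Real.pi_pos]
  -- notation
  set X : ℝ := (-4 * π * a ^ 2 * t) ^ (-(n : ℝ) / 2) with hX
  set I₀ : ℝ := ∫ η : Fin n → ℝ,
      φ₀ η * Real.exp (-(∑ i, (η i - x i) ^ 2) / (-4 * a ^ 2 * t)) with hI₀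
  set I₁ : ℝ := ∫ η : Fin n → ℝ,
      φ₀ η * (Real.exp (-(∑ i, (η i - x i) ^ 2) / (-4 * a ^ 2 * t)) *
        ((∑ i, (η i - x i) ^ 2) / (-4 * a ^ 2 * t) ^ 2)) with hI₁
  -- ===== time derivative =====
  have hK := hasDerivAt_K hint hcont x hb
  have hlin : HasDerivAt (fun s : ℝ => -4 * a ^ 2 * s) (-4 * a ^ 2) t := by
    have h := (hasDerivAt_id' (𝕜 := ℝ) t).const_mul (-4 * a ^ 2)
    rwa [mul_one] at h
  have hJ : HasDerivAt (fun s : ℝ => ∫ η : Fin n → ℝ,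
      φ₀ η * Real.exp (-(∑ i, (η i - x i) ^ 2) / (-4 * a ^ 2 * s)))
      (I₁ * (-4 * a ^ 2)) t := by
    exact hK.2.comp t hlin
  have hlin2 : HasDerivAt (fun s : ℝ => -4 * π * a ^ 2 * s) (-4 * π * a ^ 2) t := by
    have h := (hasDerivAt_id' (𝕜 := ℝ) t).const_mul (-4 * π * a ^ 2)
    rwa [mul_one] at h
  have hcderiv : HasDerivAt (fun s : ℝ => (-4 * π * a ^ 2 * s) ^ (-(n : ℝ) / 2))
      ((-(n : ℝ) / 2) * (-4 * π * a ^ 2 * t) ^ (-(n : ℝ) / 2 - 1) * (-4 * π * a ^ 2)) t := by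
    have hout := Real.hasDerivAt_rpow_const (x := -4 * π * a ^ 2 * t) (p := -(n : ℝ) / 2)
      (Or.inl hD.ne')
    exact hout.comp t hlin2
  have hfeq : (fun s => f x s) =ᶠ[𝓝 t] (fun s : ℝ => (-4 * π * a ^ 2 * s) ^ (-(n : ℝ) / 2) *
      ∫ η : Fin n → ℝ, φ₀ η * Real.exp (-(∑ i, (η i - x i) ^ 2) / (-4 * a ^ 2 * s))) := by
    filter_upwards [Iio_mem_nhds ht] with s hs
    exact hf x s hs
  have hderiv_t : deriv (fun s => f x s) t =
      ((-(n : ℝ) / 2) * (-4 * π * a ^ 2 * t) ^ (-(n : ℝ) / 2 - 1) * (-4 * π * a ^ 2)) * I₀ +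
        X * (I₁ * (-4 * a ^ 2)) := by
    rw [hfeq.deriv_eq]
    exact (hcderiv.mul hJ).deriv
  -- ===== spatial derivatives =====
  have hspatial : ∀ i : Fin n,
      iteratedDeriv 2 (fun y => f (Function.update x i y) t) (x i) =
        X * ∫ η : Fin n → ℝ,
          φ₀ η * (Real.exp (-(∑ i', (η i' - x i') ^ 2) / (-4 * a ^ 2 * t)) *
            ((2 * ((η i - x i) / (-4 * a ^ 2 * t))) ^ 2 - 2 / (-4 * a ^ 2 * t))) := by
    intro i
    have hgi : (fun y => f (Function.update x i y) t) = fun y : ℝ =>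
        X * ∫ η : Fin n → ℝ,
          φ₀ η * Real.exp (-(∑ i', (η i' - Function.update x i y i') ^ 2) / (-4 * a ^ 2 * t)) :=
      funext fun y => hf _ t ht
    have hd1 : deriv (fun y => f (Function.update x i y) t) = fun y : ℝ =>
        X * ∫ η : Fin n → ℝ,
          φ₀ η * (Real.exp (-(∑ i', (η i' - Function.update x i y i') ^ 2) / (-4 * a ^ 2 * t)) *
            (2 * ((η i - y) / (-4 * a ^ 2 * t)))) := by
      rw [hgi]
      funext y
      exact (((hasDerivAt_D1 hint hcont x i hb y).2).const_mul X).deriv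
    rw [iteratedDeriv_succ, iteratedDeriv_one, hd1]
    have hd2 := (((hasDerivAt_D2 hint hcont x i hb (x i)).2).const_mul X).deriv
    rw [hd2]
    simp only [Function.update_eq_self]
  rw [hderiv_t]
  simp only [hspatial]
  -- ===== sum over i =====
  have hintgr : ∀ i : Fin n, Integrable (fun η : Fin n → ℝ =>
      φ₀ η * (Real.exp (-(∑ i', (η i' - x i') ^ 2) / (-4 * a ^ 2 * t)) *
        ((2 * ((η i - x i) / (-4 * a ^ 2 * t))) ^ 2 - 2 / (-4 * a ^ 2 * t)))) := by
    intro i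
    have := (hasDerivAt_D2 hint hcont x i hb (x i)).1
    simpa only [Function.update_eq_self] using this
  have hsum : ∑ i : Fin n, (X * ∫ η : Fin n → ℝ,
      φ₀ η * (Real.exp (-(∑ i', (η i' - x i') ^ 2) / (-4 * a ^ 2 * t)) *
        ((2 * ((η i - x i) / (-4 * a ^ 2 * t))) ^ 2 - 2 / (-4 * a ^ 2 * t)))) =
      X * (4 * I₁ - (2 * n / (-4 * a ^ 2 * t)) * I₀) := by
    rw [← Finset.mul_sum, ← integral_finset_sum _ (fun i _ => hintgr i)]
    congr 1
    have hptwise : ∀ η : Fin n → ℝ, (∑ i : Fin n,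
        φ₀ η * (Real.exp (-(∑ i', (η i' - x i') ^ 2) / (-4 * a ^ 2 * t)) *
          ((2 * ((η i - x i) / (-4 * a ^ 2 * t))) ^ 2 - 2 / (-4 * a ^ 2 * t)))) =
        4 * (φ₀ η * (Real.exp (-(∑ i', (η i' - x i') ^ 2) / (-4 * a ^ 2 * t)) *
          ((∑ i', (η i' - x i') ^ 2) / (-4 * a ^ 2 * t) ^ 2))) -
        (2 * n / (-4 * a ^ 2 * t)) *
          (φ₀ η * Real.exp (-(∑ i', (η i' - x i') ^ 2) / (-4 * a ^ 2 * t))) := by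
      intro η
      set E := Real.exp (-(∑ i', (η i' - x i') ^ 2) / (-4 * a ^ 2 * t)) with hE
      have h1 : ∀ i : Fin n, φ₀ η * (E * ((2 * ((η i - x i) / (-4 * a ^ 2 * t))) ^ 2 -
          2 / (-4 * a ^ 2 * t))) =
          (φ₀ η * E) * ((4 / (-4 * a ^ 2 * t) ^ 2) * (η i - x i) ^ 2) -
          (φ₀ η * E) * (2 / (-4 * a ^ 2 * t)) := fun i => by ring
      simp only [h1]
      rw [Finset.sum_sub_distrib, ← Finset.mul_sum, ← Finset.mul_sum, Finset.sum_const,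
        Finset.card_univ, Fintype.card_fin]
      push_cast
      ring
    simp only [hptwise]
    rw [integral_sub ((hasDerivAt_K hint hcont x hb).1.const_mul 4)
      ((integrable_phiE hint hcont x hb).const_mul _), integral_const_mul, integral_const_mul]
  rw [hsum]
  -- ===== final algebra =====
  have hpow : (-4 * π * a ^ 2 * t) ^ (-(n : ℝ) / 2 - 1) =
      X / (-4 * π * a ^ 2 * t) := by
    rw [hX, ← Real.rpow_sub_one hD.ne']
  rw [hpow]
  have hπ0 : π ≠ 0 := Real.pi_ne_zero
  have ht0 : t ≠ 0 := ht.ne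
  have ha0 : a ≠ 0 := ha.ne'
  field_simp
  ring
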